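/- Let γ = 1 − α/[W⁻¹ P e_j]_j with 0 < α < [W⁻¹ P e_j]_j = ‖P e_j‖₂. Then x* = γ e_j is the unique minimizer of J(x) = ½‖P x − P e_j‖₂² + α ‖W x‖₁ over ℝⁿ. -/

import Mathlib

open Matrix Finset

noncomputable def enorm₂ {n : ℕ} (v : Fin n → ℝ) : ℝ := Real.sqrt (∑ i, v i ^ 2)

noncomputable def wInvP {n : ℕ} (P : Matrix (Fin n) (Fin n) ℝ) (j i : Fin n) : ℝ :=
  P.mulVec (Pi.single j 1) i / enorm₂ (P.mulVec (Pi.single i 1))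

/-- The regularized functional `J(x) = ½‖P x − P e_j‖₂² + α ∑ i ‖P e_i‖₂ |x i|`. -/
noncomputable def Jfun {n : ℕ} (P : Matrix (Fin n) (Fin n) ℝ) (j : Fin n) (α : ℝ)
    (x : Fin n → ℝ) : ℝ :=
  (1 / 2) * ∑ k, (P.mulVec x k - P.mulVec (Pi.single j 1) k) ^ 2 +
    α * ∑ i, enorm₂ (P.mulVec (Pi.single i 1)) * |x i|

lemma cs_strict {n : ℕ} (u v : Fin n → ℝ) (hu : u ≠ 0) (h : ∀ c : ℝ, v ≠ c • u) :
    |∑ k, u k * v k| < Real.sqrt (∑ k, u k ^ 2) * Real.sqrt (∑ k, v k ^ 2) := by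
  set U : EuclideanSpace ℝ (Fin n) := WithLp.toLp 2 u
  set V : EuclideanSpace ℝ (Fin n) := WithLp.toLp 2 v
  have hin : (inner ℝ U V : ℝ) = ∑ k, u k * v k := by
    simp [U, V, PiLp.inner_apply, RCLike.inner_apply, mul_comm]
  have hnu : ‖U‖ = Real.sqrt (∑ k, u k ^ 2) := by
    rw [EuclideanSpace.norm_eq]; congr 1; simp [U, Real.norm_eq_abs, sq_abs]
  have hnv : ‖V‖ = Real.sqrt (∑ k, v k ^ 2) := by
    rw [EuclideanSpace.norm_eq]; congr 1; simp [V, Real.norm_eq_abs, sq_abs]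
  have hUn : ‖U‖ ≠ 0 := norm_ne_zero_iff.mpr (by simpa [U] using hu)
  rw [← hin, ← hnu, ← hnv, abs_lt]
  constructor
  · have key := inner_lt_norm_mul_iff_real (x := -U) (y := V)
    rw [inner_neg_left, norm_neg] at key
    have h2 : ‖V‖ • (-U) ≠ ‖U‖ • V := by
      intro he
      refine h (-(‖V‖ / ‖U‖)) ?_
      have h3 : V = ‖U‖⁻¹ • (‖V‖ • -U) := by
        rw [he, smul_smul, inv_mul_cancel₀ hUn, one_smul]
      have h4 : ‖U‖⁻¹ • (‖V‖ • -U) = (-(‖V‖ / ‖U‖)) • U := by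
        rw [div_eq_mul_inv]; module
      exact congrArg WithLp.ofLp (h3.trans h4)
    linarith [key.mpr h2]
  · apply inner_lt_norm_mul_iff_real.mpr
    intro he
    refine h (‖V‖ / ‖U‖) ?_
    have h3 : V = ‖U‖⁻¹ • (‖V‖ • U) := by
      rw [he, smul_smul, inv_mul_cancel₀ hUn, one_smul]
    have h4 : ‖U‖⁻¹ • (‖V‖ • U) = (‖V‖ / ‖U‖) • U := by
      rw [div_eq_mul_inv]; module
    exact congrArg WithLp.ofLp (h3.trans h4)

/-- Let `γ = 1 − α/[W⁻¹ P e_j]_j` with `0 < α < [W⁻¹ P e_j]_j = ‖P e_j‖₂`. Then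
`x* = γ • e_j` is the unique minimizer of `J` over `ℝⁿ`. -/
theorem regularized_unique_minimizer {n : ℕ}
    (P : Matrix (Fin n) (Fin n) ℝ) (hsymm : Pᵀ = P) (hidem : P * P = P)
    (hnz : ∀ i : Fin n, P.mulVec (Pi.single i 1) ≠ 0)
    (j : Fin n)
    (hpar : ∀ i : Fin n, i ≠ j → ∀ c : ℝ,
      P.mulVec (Pi.single j 1) ≠ c • P.mulVec (Pi.single i 1))
    (α : ℝ) (hα0 : 0 < α) (hα1 : α < wInvP P j j) :
    wInvP P j j = enorm₂ (P.mulVec (Pi.single j 1)) ∧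
    ∀ y : Fin n → ℝ, y ≠ (1 - α / wInvP P j j) • (Pi.single j 1 : Fin n → ℝ) →
      Jfun P j α ((1 - α / wInvP P j j) • (Pi.single j 1 : Fin n → ℝ)) < Jfun P j α y := by
  -- basic facts
  have hp : ∀ i : Fin n, P.mulVec (Pi.single i 1) = fun k => P k i := by
    intro i; rw [Matrix.mulVec_single]; funext k; simp
  have hPsym : ∀ i k : Fin n, P i k = P k i := by
    intro i k
    have := congrFun (congrFun hsymm i) k
    simpa [Matrix.transpose_apply] using this.symm
  have hPP : ∀ i l : Fin n, ∑ k, P k i * P k l = P i l := by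
    intro i l
    have h1 : (P * P) i l = P i l := by rw [hidem]
    rw [Matrix.mul_apply] at h1
    calc ∑ k, P k i * P k l = ∑ k, P i k * P k l :=
          Finset.sum_congr rfl fun k _ => by rw [hPsym i k]
      _ = P i l := h1
  have hsq : ∀ i : Fin n, ∑ k, (P k i) ^ 2 = P i i := by
    intro i
    rw [← hPP i i]
    exact Finset.sum_congr rfl fun k _ => (sq (P k i)).symm ▸ by ring
  have hPiipos : ∀ i : Fin n, 0 < P i i := by
    intro i
    rcases (Finset.sum_nonneg (fun k _ => sq_nonneg (P k i))).lt_or_eq with h | h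
    · rwa [hsq i] at h
    · exfalso
      apply hnz i
      rw [hp i]
      funext k
      have hz := (Finset.sum_eq_zero_iff_of_nonneg (fun k _ => sq_nonneg (P k i))).mp h.symm
      have := hz k (Finset.mem_univ k)
      exact pow_eq_zero_iff (two_ne_zero) |>.mp this
  set s : ℝ := Real.sqrt (P j j) with hs_def
  have hs : 0 < s := Real.sqrt_pos.mpr (hPiipos j)
  have hs2 : s ^ 2 = P j j := Real.sq_sqrt (hPiipos j).le
  set w : Fin n → ℝ := fun i => Real.sqrt (P i i) with hw_def
  have hw : ∀ i, enorm₂ (P.mulVec (Pi.single i 1)) = w i := by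
    intro i
    rw [enorm₂, hp i]
    simp only [hw_def]
    rw [hsq i]
  have hwpos : ∀ i, 0 < w i := fun i => Real.sqrt_pos.mpr (hPiipos i)
  have hW : wInvP P j j = s := by
    rw [wInvP, hw j]
    have h1 : P.mulVec (Pi.single j 1) j = P j j := by rw [hp j]
    have h2 : w j = s := rfl
    rw [h1, h2, div_eq_iff (ne_of_gt hs), ← hs2]
    ring
  have hCS : ∀ i : Fin n, i ≠ j → |P i j| < w i * s := by
    intro i hij
    have hu : (fun k => P k i) ≠ 0 := by
      rw [← hp i]; exact hnz i
    have hv : ∀ c : ℝ, (fun k => P k j) ≠ c • (fun k => P k i) := by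
      intro c
      rw [← hp i, ← hp j]
      exact hpar i hij c
    have := cs_strict (fun k => P k i) (fun k => P k j) hu hv
    rw [hsq i, hsq j] at this
    rwa [hPP i j] at this
  constructor
  · rw [hW, hw j]
  rw [hW] at hα1 ⊢
  intro y hy
  set γ : ℝ := 1 - α / s with hγ_def
  have hγpos : 0 < γ := by
    rw [hγ_def]
    have : α / s < 1 := (div_lt_one hs).mpr hα1
    linarith
  set xs : Fin n → ℝ := γ • (Pi.single j 1 : Fin n → ℝ) with hxs_def
  have hxsi : ∀ i, xs i = if i = j then γ else 0 := by
    intro i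
    simp [hxs_def, Pi.single_apply]
  set d : Fin n → ℝ := fun i => y i - xs i with hd_def
  have hyd : y = d + xs := by funext i; simp [hd_def]
  have hPxs : P.mulVec xs = fun k => γ * P k j := by
    rw [hxs_def, Matrix.mulVec_smul, hp j]
    funext k; simp
  have hPy : ∀ k, P.mulVec y k = P.mulVec d k + γ * P k j := by
    intro k
    rw [hyd, Matrix.mulVec_add, hPxs]
    simp
  set Q : ℝ := ∑ k, (P.mulVec d k) ^ 2 with hQ_def
  set S : ℝ := ∑ i, d i * P i j with hS_def
  have hSval : ∑ k, P k j * P.mulVec d k = S := by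
    calc ∑ k, P k j * P.mulVec d k = ∑ k, ∑ i, P k j * (P k i * d i) := by
          refine Finset.sum_congr rfl fun k _ => ?_
          rw [Matrix.mulVec, dotProduct, Finset.mul_sum]
      _ = ∑ i, ∑ k, P k j * (P k i * d i) := Finset.sum_comm
      _ = S := by
          rw [hS_def]
          refine Finset.sum_congr rfl fun i _ => ?_
          have h1 : ∑ k, P k j * (P k i * d i) = (∑ k, P k i * P k j) * d i := by
            rw [Finset.sum_mul]
            exact Finset.sum_congr rfl fun k _ => by ring
          rw [h1, hPP i j]; ring
  -- value of J at y
  have hJy : Jfun P j α y =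
      (1/2) * Q - (α/s) * S + (1/2) * (α/s)^2 * P j j + α * ∑ i, w i * |y i| := by
    rw [Jfun]
    have hterm : ∀ k, (P.mulVec y k - P.mulVec (Pi.single j 1) k) ^ 2
        = (P.mulVec d k)^2 - 2*(α/s) * (P k j * P.mulVec d k) + (α/s)^2 * (P k j)^2 := by
      intro k
      rw [hPy k, hp j]
      simp only [hγ_def]
      ring
    rw [Finset.sum_congr rfl (fun k _ => hterm k)]
    rw [Finset.sum_add_distrib, Finset.sum_sub_distrib, ← Finset.mul_sum, ← Finset.mul_sum,
      hSval, hsq j]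
    have hpen : ∑ i, enorm₂ (P.mulVec (Pi.single i 1)) * |y i| = ∑ i, w i * |y i| :=
      Finset.sum_congr rfl fun i _ => by rw [hw i]
    rw [hpen, hQ_def]
    ring
  -- value of J at xs
  have hJxs : Jfun P j α xs =
      (1/2) * (α/s)^2 * P j j + α * (s * γ) := by
    rw [Jfun]
    have hterm : ∀ k, (P.mulVec xs k - P.mulVec (Pi.single j 1) k) ^ 2
        = (α/s)^2 * (P k j)^2 := by
      intro k
      rw [hPxs, hp j]
      simp only [hγ_def]
      ring
    rw [Finset.sum_congr rfl (fun k _ => hterm k), ← Finset.mul_sum, hsq j]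
    have hpen : ∑ i, enorm₂ (P.mulVec (Pi.single i 1)) * |xs i| = s * γ := by
      rw [Finset.sum_eq_single j]
      · rw [hw j, hxsi j]
        simp [abs_of_pos hγpos, hw_def, hs_def]
      · intro i _ hij
        rw [hxsi i, if_neg hij]
        simp
      · intro h; exact absurd (Finset.mem_univ j) h
    rw [hpen]
    ring
  -- per-term lower bounds
  set g : Fin n → ℝ := fun i =>
    -(α/s) * d i * P i j + α * w i * (|y i| - |xs i|) with hg_def
  have hg_nonneg : ∀ i, 0 ≤ g i := by
    intro i
    by_cases hij : i = j
    · subst hij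
      have : g i = α * s * (|y i| - y i) := by
        rw [hg_def]
        simp only
        rw [hd_def]
        simp only
        rw [hxsi i, if_pos rfl, abs_of_pos hγpos]
        have hPij : P i i = s ^ 2 := hs2.symm
        rw [hPij]
        have hwi : w i = s := rfl
        rw [hwi]
        field_simp
        ring
      rw [this]
      have h5 : 0 ≤ |y i| - y i := by linarith [le_abs_self (y i)]
      exact mul_nonneg (mul_nonneg hα0.le hs.le) h5
    · have hxi : xs i = 0 := by rw [hxsi i, if_neg hij]
      have hdi : d i = y i := by rw [hd_def]; simp [hxi]
      have hcs := hCS i hij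
      have h1 : d i * P i j ≤ |y i| * |P i j| := by
        rw [hdi]
        calc y i * P i j ≤ |y i * P i j| := le_abs_self _
          _ = |y i| * |P i j| := abs_mul _ _
      have h2 : |y i| * |P i j| ≤ |y i| * (w i * s) :=
        mul_le_mul_of_nonneg_left hcs.le (abs_nonneg _)
      have hg : g i = -(α/s) * (d i * P i j) + α * w i * |y i| := by
        simp only [hg_def]
        rw [hxi, abs_zero, sub_zero]
        ring
      rw [hg]
      have hαs : 0 < α / s := div_pos hα0 hs
      have key : d i * P i j ≤ |y i| * (w i * s) := le_trans h1 h2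
      have h3 : (α/s) * (d i * P i j) ≤ (α/s) * (|y i| * (w i * s)) :=
        mul_le_mul_of_nonneg_left key hαs.le
      have h4 : (α/s) * (|y i| * (w i * s)) = α * w i * |y i| := by
        field_simp
      linarith
  have hg_pos : ∀ i, i ≠ j → y i ≠ 0 → 0 < g i := by
    intro i hij hyi
    have hxi : xs i = 0 := by rw [hxsi i, if_neg hij]
    have hdi : d i = y i := by rw [hd_def]; simp [hxi]
    have hcs := hCS i hij
    have hyabs : 0 < |y i| := abs_pos.mpr hyi
    have h1 : d i * P i j ≤ |y i| * |P i j| := by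
      rw [hdi]
      calc y i * P i j ≤ |y i * P i j| := le_abs_self _
        _ = |y i| * |P i j| := abs_mul _ _
    have h2 : |y i| * |P i j| < |y i| * (w i * s) :=
      (mul_lt_mul_iff_right₀ hyabs).mpr hcs
    have hg : g i = -(α/s) * (d i * P i j) + α * w i * |y i| := by
      simp only [hg_def]
      rw [hxi, abs_zero, sub_zero]
      ring
    rw [hg]
    have hαs : 0 < α / s := div_pos hα0 hs
    have key : d i * P i j < |y i| * (w i * s) := lt_of_le_of_lt h1 h2
    have h3 : (α/s) * (d i * P i j) < (α/s) * (|y i| * (w i * s)) :=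
      (mul_lt_mul_iff_right₀ hαs).mpr key
    have h4 : (α/s) * (|y i| * (w i * s)) = α * w i * |y i| := by
      field_simp
    linarith
  -- sum of g
  have hgsum : ∑ i, g i = -(α/s) * S + α * (∑ i, w i * |y i|) - α * (s * γ) := by
    have h1 : ∑ i, g i = ∑ i, (-(α/s) * (d i * P i j) + α * (w i * |y i|) - α * (w i * |xs i|)) := by
      refine Finset.sum_congr rfl fun i _ => ?_
      simp only [hg_def]; try ring
    rw [h1, Finset.sum_sub_distrib, Finset.sum_add_distrib, ← Finset.mul_sum, ← Finset.mul_sum,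
      ← Finset.mul_sum]
    have h2 : ∑ i, d i * P i j = S := rfl
    have h3 : ∑ i, w i * |xs i| = s * γ := by
      rw [Finset.sum_eq_single j]
      · rw [hxsi j, if_pos rfl, abs_of_pos hγpos]
      · intro i _ hij
        rw [hxsi i, if_neg hij]; simp
      · intro h; exact absurd (Finset.mem_univ j) h
    rw [h2, h3]
  -- positivity of the gap
  have hQnonneg : 0 ≤ Q := Finset.sum_nonneg fun k _ => sq_nonneg _
  have hgap : 0 < (1/2) * Q + ∑ i, g i := by
    by_cases hcase : ∀ i, i ≠ j → y i = 0
    · -- then d = (y j - γ) • e_j with y j ≠ γ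
      have hyj : y j ≠ γ := by
        intro he
        apply hy
        funext i
        rw [hxsi i]
        by_cases hij : i = j
        · rw [if_pos hij, hij, he]
        · rw [if_neg hij, hcase i hij]
      have hdfun : d = (y j - γ) • (Pi.single j 1 : Fin n → ℝ) := by
        funext i
        show y i - xs i = (y j - γ) * ((Pi.single j 1 : Fin n → ℝ) i)
        rw [hxsi i, Pi.single_apply]
        by_cases hij : i = j
        · rw [if_pos hij, if_pos hij, hij]; ring
        · rw [if_neg hij, if_neg hij, hcase i hij]; ring
      have hQval : Q = (y j - γ)^2 * P j j := by
        rw [hQ_def, hdfun]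
        have : P.mulVec ((y j - γ) • (Pi.single j 1 : Fin n → ℝ)) = fun k => (y j - γ) * P k j := by
          rw [Matrix.mulVec_smul, hp j]; funext k; simp
        rw [this]
        have h6 : ∑ k, ((y j - γ) * P k j)^2 = (y j - γ)^2 * ∑ k, (P k j)^2 := by
          rw [Finset.mul_sum]
          exact Finset.sum_congr rfl fun k _ => by ring
        rw [h6, hsq j]
      have hQpos : 0 < Q := by
        rw [hQval]
        have hne : y j - γ ≠ 0 := sub_ne_zero.mpr hyj
        exact mul_pos (lt_of_le_of_ne (sq_nonneg _) (Ne.symm (pow_ne_zero 2 hne))) (hPiipos j)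
      have := Finset.sum_nonneg (fun i (_ : i ∈ Finset.univ) => hg_nonneg i)
      linarith
    · push_neg at hcase
      obtain ⟨i₀, hi₀j, hyi₀⟩ := hcase
      have hpos : 0 < ∑ i, g i :=
        Finset.sum_pos' (fun i _ => hg_nonneg i) ⟨i₀, Finset.mem_univ i₀, hg_pos i₀ hi₀j hyi₀⟩
      linarith
  rw [hJxs, hJy]
  linarith [hgap, hgsum, hQnonneg]
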